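/- Let R = ℚ[x,y]/(xy) and A = R/y ≅ ℚ[x]. The R-module A admits the free resolution ⋯ → R →^x R →^y R →^x R →^y R → A → 0, and consequently Tor_n^R(A, A) ≅ A/xA ≅ ℚ for all odd n ≥ 1; in particular Tor_1^R(A,A) ≠ 0 and is not a flat A-module. -/

import Mathlib

set_option maxHeartbeats 1000000
set_option synthInstance.maxHeartbeats 400000
open scoped TensorProduct


noncomputable section

open MvPolynomial

/-- The ring `R = ℚ[x,y]/(xy)`. -/
abbrev RXY : Type :=
  MvPolynomial (Fin 2) ℚ ⧸ Ideal.span {(X 0 : MvPolynomial (Fin 2) ℚ) * X 1}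

/-- The image of `x` in `R`. -/
abbrev xR : RXY := Ideal.Quotient.mk _ (X 0)

/-- The image of `y` in `R`. -/
abbrev yR : RXY := Ideal.Quotient.mk _ (X 1)

/-- The `R`-algebra `A = R/y ≅ ℚ[x]`. -/
abbrev AR : Type := RXY ⧸ Ideal.span {yR}

instance instCommRingAR : CommRing AR := Ideal.Quotient.commRing _

/-- The image of `x` in `A`. -/
abbrev xA : AR := Ideal.Quotient.mk _ xR

/-- `A/xA`, which computes `Tor_n^R(A,A)` for odd `n ≥ 1`. -/
abbrev TorOdd : Type := AR ⧸ Ideal.span {xA}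

/-! ### Auxiliary lemmas -/

/-- The quotient map `ℚ[x,y] → R`. -/
abbrev mkR : MvPolynomial (Fin 2) ℚ →+* RXY :=
  Ideal.Quotient.mk (Ideal.span {(X 0 : MvPolynomial (Fin 2) ℚ) * X 1})

/-- The quotient map `R → A`. -/
abbrev mkA : RXY →+* AR := Ideal.Quotient.mk (Ideal.span {yR})

/-- The quotient map `A → A/xA`. -/
abbrev mkT : AR →+* TorOdd := Ideal.Quotient.mk (Ideal.span {xA})

private lemma prime_X0 : Prime (X 0 : MvPolynomial (Fin 2) ℚ) := by
  rw [← MulEquiv.prime_iff (MvPolynomial.finSuccEquiv ℚ 1).toRingEquiv.toMulEquiv]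
  have : ((MvPolynomial.finSuccEquiv ℚ 1).toRingEquiv.toMulEquiv) (X 0) = Polynomial.X := by
    simp [MvPolynomial.finSuccEquiv_X_zero]
  rw [this]; exact Polynomial.prime_X

private lemma prime_X1 : Prime (X 1 : MvPolynomial (Fin 2) ℚ) := by
  rw [← MulEquiv.prime_iff (MvPolynomial.renameEquiv ℚ (Equiv.swap (0 : Fin 2) 1)).toRingEquiv.toMulEquiv]
  have h : (MvPolynomial.renameEquiv ℚ
      (Equiv.swap (0 : Fin 2) 1)).toRingEquiv.toMulEquiv (X 1) = X 0 := by
    simp [Equiv.swap_apply_right]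
  rw [h]
  exact prime_X0

private lemma mkR_eq_zero (p : MvPolynomial (Fin 2) ℚ) :
    mkR p = 0 ↔ (X 0 : MvPolynomial (Fin 2) ℚ) * X 1 ∣ p := by
  rw [Ideal.Quotient.eq_zero_iff_mem, Ideal.mem_span_singleton]

private lemma mkA_eq_zero (p : MvPolynomial (Fin 2) ℚ) :
    mkA (mkR p) = 0 ↔ (X 1 : MvPolynomial (Fin 2) ℚ) ∣ p := by
  rw [Ideal.Quotient.eq_zero_iff_mem, Ideal.mem_span_singleton]
  constructor
  · rintro ⟨s, hs⟩
    obtain ⟨t, rfl⟩ := Ideal.Quotient.mk_surjective s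
    have h0 : mkR (p - X 1 * t) = 0 := by
      rw [map_sub, map_mul, sub_eq_zero]
      exact hs
    rw [mkR_eq_zero] at h0
    obtain ⟨u, hu⟩ := h0
    exact ⟨t + X 0 * u, by linear_combination hu⟩
  · rintro ⟨t, rfl⟩
    exact ⟨mkR t, by rw [map_mul]⟩

private lemma mkB_eq_zero (p : MvPolynomial (Fin 2) ℚ) :
    mkA (mkR (X 0 * p)) = 0 ↔ (X 1 : MvPolynomial (Fin 2) ℚ) ∣ p := by
  rw [mkA_eq_zero]
  constructor
  · intro h
    exact (prime_X1.2.2 _ _ h).resolve_left (by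
      rw [MvPolynomial.X_dvd_X]; decide)
  · exact fun h => h.mul_left _

private lemma not_flat_aux {R M : Type} [CommRing R] [AddCommGroup M] [Module R M]
    (r : R) (hr : IsSMulRegular R r) (m : M) (hm : m ≠ 0) (h : r • m = 0) :
    ¬ Module.Flat R M := by
  intro hf
  have h1 : IsSMulRegular (M ⊗[R] R) r := hr.lTensor M
  have h2 : IsSMulRegular M r :=
    h1.of_injective (TensorProduct.rid R M).symm.toLinearMap
      (TensorProduct.rid R M).symm.injective
  exact hm (h2 (show r • m = r • 0 by rw [h, smul_zero]))

/-- `xA` is a regular element of `A`. -/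
private lemma regular_xA : IsSMulRegular AR xA := by
  have key : ∀ a : AR, xA * a = 0 → a = 0 := by
    intro a h
    obtain ⟨r, rfl⟩ := Ideal.Quotient.mk_surjective a
    obtain ⟨p, rfl⟩ := Ideal.Quotient.mk_surjective r
    have h' : mkA (mkR (X 0 * p)) = 0 := by
      rw [map_mul, map_mul]; exact h
    rw [mkB_eq_zero] at h'
    obtain ⟨q, rfl⟩ := h'
    exact (mkA_eq_zero _).mpr (dvd_mul_right _ _)
  intro a b hab
  have : xA * (a - b) = 0 := by
    have hab' : xA * a = xA * b := hab
    rw [mul_sub, hab', sub_self]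
  have := key _ this
  exact sub_eq_zero.mp this

/-- Evaluation at the origin, as a ring hom `ℚ[x,y] → ℚ`. -/
abbrev e0 : MvPolynomial (Fin 2) ℚ →+* ℚ := MvPolynomial.eval (fun _ => (0 : ℚ))

private lemma e0_vanish : ∀ a ∈ Ideal.span {(X 0 : MvPolynomial (Fin 2) ℚ) * X 1}, e0 a = 0 := by
  intro a ha
  rw [Ideal.mem_span_singleton] at ha
  obtain ⟨c, rfl⟩ := ha
  simp

/-- Evaluation at the origin descends to `R`. -/
abbrev ε₁ : RXY →+* ℚ := Ideal.Quotient.lift _ e0 e0_vanish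

private lemma ε₁_vanish : ∀ a ∈ Ideal.span {yR}, ε₁ a = 0 := by
  intro a ha
  rw [Ideal.mem_span_singleton] at ha
  obtain ⟨c, rfl⟩ := ha
  obtain ⟨p, rfl⟩ := Ideal.Quotient.mk_surjective c
  simp [yR]

/-- Evaluation at the origin descends to `A`. -/
abbrev ε₂ : AR →+* ℚ := Ideal.Quotient.lift _ ε₁ ε₁_vanish

private lemma ε₂_vanish : ∀ a ∈ Ideal.span {xA}, ε₂ a = 0 := by
  intro a ha
  rw [Ideal.mem_span_singleton] at ha
  obtain ⟨c, rfl⟩ := ha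
  obtain ⟨r, rfl⟩ := Ideal.Quotient.mk_surjective c
  obtain ⟨p, rfl⟩ := Ideal.Quotient.mk_surjective r
  simp [xA, xR]

/-- Evaluation at the origin descends to `A/xA`. -/
abbrev ε₃ : TorOdd →+* ℚ := Ideal.Quotient.lift _ ε₂ ε₂_vanish

/-- The structure map `ℚ → A/xA`. -/
abbrev ψ : ℚ →+* TorOdd := mkT.comp (mkA.comp (mkR.comp MvPolynomial.C))

private lemma mkT_X (i : Fin 2) : mkT (mkA (mkR (X i))) = 0 := by
  have h0 : mkT (mkA (mkR (X 0))) = 0 :=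
    Ideal.Quotient.eq_zero_iff_mem.mpr (Ideal.mem_span_singleton_self _)
  have h1 : mkA (mkR (X 1)) = 0 :=
    Ideal.Quotient.eq_zero_iff_mem.mpr (Ideal.mem_span_singleton_self _)
  fin_cases i
  · exact h0
  · show mkT (mkA (mkR (X 1))) = 0
    rw [h1, map_zero]

private lemma mkT_eq (p : MvPolynomial (Fin 2) ℚ) :
    mkT (mkA (mkR p)) = ψ (e0 p) := by
  induction p using MvPolynomial.induction_on with
  | C a => simp [ψ, e0]
  | add p q hp hq => simp only [map_add, hp, hq]
  | mul_X p i hp =>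
    rw [map_mul, map_mul, map_mul, mkT_X, mul_zero, map_mul]
    simp

/-- `A/xA ≅ ℚ`. -/
def torOddEquiv : TorOdd ≃+* ℚ := by
  refine (fun h1 h2 => RingEquiv.ofRingHom ε₃ ψ h2 h1) ?_ ?_
  · apply RingHom.ext
    intro z
    obtain ⟨a, rfl⟩ := Ideal.Quotient.mk_surjective z
    obtain ⟨r, rfl⟩ := Ideal.Quotient.mk_surjective a
    obtain ⟨p, rfl⟩ := Ideal.Quotient.mk_surjective r
    have h1 : ε₃ (mkT (mkA (mkR p))) = e0 p := rfl
    have h2 : mkT (mkA (mkR p)) = ψ (e0 p) := mkT_eq p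
    calc ψ.comp ε₃ (mkT (mkA (mkR p))) = ψ (e0 p) := by rw [RingHom.comp_apply, h1]
      _ = mkT (mkA (mkR p)) := h2.symm
      _ = RingHom.id TorOdd (mkT (mkA (mkR p))) := rfl
  · exact Subsingleton.elim _ _

theorem derived_example :
    Function.Exact (fun r : RXY => xR * r) (fun r : RXY => yR * r) ∧
    Function.Exact (fun r : RXY => yR * r) (fun r : RXY => xR * r) ∧
    Nonempty (TorOdd ≃+* ℚ) ∧
    Nontrivial TorOdd ∧
    ¬ Module.Flat AR TorOdd := by
  have hxy : yR * xR = 0 := by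
    calc yR * xR = mkR (X 1 * X 0) := (map_mul _ _ _).symm
      _ = mkR (X 0 * X 1) := congrArg mkR (mul_comm _ _)
      _ = 0 := Ideal.Quotient.eq_zero_iff_mem.mpr (Ideal.mem_span_singleton_self _)
  have hnt : Nontrivial TorOdd := ε₃.domain_nontrivial
  refine ⟨?_, ?_, ⟨torOddEquiv⟩, hnt, ?_⟩
  · -- Exact (x·) (y·)
    intro r
    obtain ⟨p, rfl⟩ := Ideal.Quotient.mk_surjective r
    simp only [Set.mem_range]
    constructor
    · intro h
      have h' : mkR (X 1 * p) = 0 := by rw [map_mul]; exact h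
      rw [mkR_eq_zero] at h'
      have h'' : X 1 * X 0 ∣ X 1 * p := by rwa [mul_comm (X 0)] at h'
      obtain ⟨q, hq⟩ := (mul_dvd_mul_iff_left (MvPolynomial.X_ne_zero 1)).mp h''
      exact ⟨mkR q, by rw [← map_mul, ← hq]⟩
    · rintro ⟨s, hs⟩
      rw [← hs]
      show yR * (xR * s) = 0
      rw [← mul_assoc, hxy, zero_mul]
  · -- Exact (y·) (x·)
    intro r
    obtain ⟨p, rfl⟩ := Ideal.Quotient.mk_surjective r
    simp only [Set.mem_range]
    constructor
    · intro h
      have h' : mkR (X 0 * p) = 0 := by rw [map_mul]; exact h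
      rw [mkR_eq_zero] at h'
      have h'' : X 0 * X 1 ∣ X 0 * p := h'
      obtain ⟨q, hq⟩ := (mul_dvd_mul_iff_left (MvPolynomial.X_ne_zero 0)).mp h''
      exact ⟨mkR q, by rw [← map_mul, ← hq]⟩
    · rintro ⟨s, hs⟩
      rw [← hs]
      show xR * (yR * s) = 0
      rw [← mul_assoc, mul_comm xR yR, hxy, zero_mul]
  · -- not flat
    refine not_flat_aux xA regular_xA (1 : TorOdd) one_ne_zero ?_
    rw [show xA • (1 : TorOdd) = mkT xA * 1 from rfl, mul_one]
    exact Ideal.Quotient.eq_zero_iff_mem.mpr (Ideal.mem_span_singleton_self _)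

end
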